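/- Let R be a commutative ring with unity and x ∈ R. The set J_x is closed under multiplication (i.e., is a subsemigroup of the multiplicative semigroup of R) if and only if the principal ideal (x) is idempotent, i.e., (x) = (x)². -/

import Mathlib

/-- The annihilator `Ann(x) = {y ∈ R | x * y = 0}` of an element `x` of a
commutative ring `R`, as an ideal of `R`. -/
def ann {R : Type*} [CommRing R] (x : R) : Ideal R where
  carrier := {y : R | x * y = 0}
  add_mem' := by
    intro a b ha hb
    simp only [Set.mem_setOf_eq] at *
    rw [mul_add, ha, hb, add_zero]
  zero_mem' := by simp
  smul_mem' := by
    intro c y hy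
    simp only [smul_eq_mul, Set.mem_setOf_eq] at *
    rw [mul_comm c y, ← mul_assoc, hy, zero_mul]

/-- `J_x = {xu : u ∈ R, [u] a unit of R/Ann(x)}`. -/
def Jset {R : Type*} [CommRing R] (x : R) : Set R :=
  {z : R | ∃ u : R, z = x * u ∧ IsUnit (Ideal.Quotient.mk (ann x) u)}

/-- `J_x` is closed under multiplication iff the principal ideal `(x)` is
idempotent, i.e. `(x) = (x)²`. -/
theorem Jset_mul_closed_iff_span_idempotent {R : Type*} [CommRing R] (x : R) :
    (∀ a ∈ Jset x, ∀ b ∈ Jset x, a * b ∈ Jset x) ↔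
      Ideal.span {x} = Ideal.span {x} ^ 2 := by
  have mem_ann : ∀ y : R, y ∈ ann x ↔ x * y = 0 := fun y => Iff.rfl
  constructor
  · intro h
    have hx : x ∈ Jset x := ⟨1, by ring, by simp⟩
    obtain ⟨w, hw, hwu⟩ := h x hx x hx
    obtain ⟨b, hb⟩ := hwu.exists_right_inv
    obtain ⟨v, rfl⟩ := Ideal.Quotient.mk_surjective b
    have hmem : w * v - 1 ∈ ann x := by
      rw [← Ideal.Quotient.eq_zero_iff_mem]
      rw [map_sub, map_mul, hb]
      simp
    have hxv : x * (w * v - 1) = 0 := (mem_ann _).mp hmem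
    have hxeq : x = x ^ 2 * v := by
      have : x * (w * v) = x := by
        have := hxv
        ring_nf at this ⊢
        linear_combination this
      calc x = x * (w * v) := this.symm
        _ = (x * w) * v := by ring
        _ = (x * x) * v := by rw [← hw]
        _ = x ^ 2 * v := by ring
    apply le_antisymm
    · rw [Ideal.span_le, Set.singleton_subset_iff]
      rw [show Ideal.span {x} ^ 2 = Ideal.span {x ^ 2} by
        rw [Ideal.span_singleton_pow]]
      exact Ideal.mem_span_singleton.mpr ⟨v, hxeq⟩
    · exact Ideal.pow_le_self (by norm_num)
  · intro h a ha b hb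
    obtain ⟨u, rfl, hu⟩ := ha
    obtain ⟨v, rfl, hv⟩ := hb
    have hx2 : x ∈ Ideal.span {x ^ 2} := by
      rw [← Ideal.span_singleton_pow, ← h]
      exact Ideal.mem_span_singleton_self x
    obtain ⟨r, hr⟩ := Ideal.mem_span_singleton.mp hx2
    have hann : x * r - 1 ∈ ann x := by
      rw [mem_ann]
      have : x = x ^ 2 * r := hr
      ring_nf
      linear_combination -this
    have hxr : (Ideal.Quotient.mk (ann x)) (x * r) = 1 := by
      have := Ideal.Quotient.eq_zero_iff_mem.mpr hann
      rw [map_sub, map_one, sub_eq_zero] at this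
      simpa using this
    have hxu : IsUnit ((Ideal.Quotient.mk (ann x)) x) := by
      apply IsUnit.of_mul_eq_one ((Ideal.Quotient.mk (ann x)) r)
      rw [← map_mul, hxr]
    refine ⟨x * (u * v), by ring, ?_⟩
    rw [map_mul]
    exact hxu.mul (by rw [map_mul]; exact hu.mul hv)
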